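/- If the MQMS system is strongly stable under some server allocation policy and the time-average arrival rate vector Ā = lim_{t→∞} (1/t) Σ_{τ=1}^t E[A(τ)] exists, then Ā lies in the downward closure of the achievable-rate polytope P: there exists y ∈ P with Ā_n ≤ y_n for every n = 1,…,N. -/

import Mathlib

open MeasureTheory ProbabilityTheory Finset Filter

noncomputable section

/-- Channel state space `S`: N×K matrices with entries in {0,…,M}. -/
abbrev ChanState (N K M : ℕ) := Fin N → Fin K → Fin (M + 1)

/-- The real-valued channel matrix `C_s` of a channel state `s`. -/
def Cmat {N K M : ℕ} (s : ChanState N K M) : Fin N → Fin K → ℝ :=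
  fun n k => ((s n k : ℕ) : ℝ)

/-- The 0/1 allocation matrix `I ∈ 𝓘` determined by an assignment `f` of servers to
queues: column `k` has its single 1 in row `f k`. -/
def allocMat {N K : ℕ} (f : Fin K → Fin N) : Fin N → Fin K → ℝ :=
  fun n k => if f k = n then 1 else 0

/-- The weight `Σ_n Σ_k α_n c_{n,k} I_{n,k}` of the allocation matrix `I = allocMat f`. -/
def weight {N K : ℕ} (α : Fin N → ℝ) (c : Fin N → Fin K → ℝ) (f : Fin K → Fin N) : ℝ :=
  ∑ n, ∑ k, α n * c n k * allocMat f n k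

/-- `max_{I ∈ 𝓘} Σ_n Σ_k α_n c_{n,k} I_{n,k}`. -/
def maxWeight {N K : ℕ} [NeZero N] (α : Fin N → ℝ) (c : Fin N → Fin K → ℝ) : ℝ :=
  Finset.univ.sup' Finset.univ_nonempty (weight α c)

/-- `b(α) = Σ_{s∈S} π_s max_{I∈𝓘} Σ_n Σ_k α_n (C_s)_{n,k} I_{n,k}`. -/
def bCoef {N K M : ℕ} [NeZero N] (π : ChanState N K M → ℝ) (α : Fin N → ℝ) : ℝ :=
  ∑ s : ChanState N K M, π s * maxWeight α (Cmat s)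

/-- The rate vector `R^{(g)}` of the deterministic policy `g`. -/
def rateVec {N K M : ℕ} (π : ChanState N K M → ℝ)
    (g : ChanState N K M → Fin K → Fin N) : Fin N → ℝ :=
  fun n => ∑ s : ChanState N K M, π s * ∑ k, Cmat s n k * allocMat (g s) n k

/-- The achievable-rate polytope `P`, the convex hull of the rate vectors of the
deterministic policies. -/
def ratePolytope {N K M : ℕ} (π : ChanState N K M → ℝ) : Set (Fin N → ℝ) :=
  convexHull ℝ {r | ∃ g : ChanState N K M → Fin K → Fin N, r = rateVec π g}

/-- `W`: products of N−1 factors from {0,…,M}, viewed inside ℝ. -/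
def Wset (N M : ℕ) : Set ℝ :=
  {w | ∃ m : Fin (N - 1) → ℕ, (∀ j, m j ≤ M) ∧ w = ∏ j, (m j : ℝ)}

/-- The set `V` of nonnegative weight vectors from the paper. -/
def Vset (N M : ℕ) : Set (Fin N → ℝ) :=
  {α | (∀ n, 0 ≤ α n) ∧
    ∀ U : Finset (Fin N), U.Nonempty → U ≠ Finset.univ →
      (∃ i ∈ U, α i ≠ 0) → (∃ j ∈ Uᶜ, α j ≠ 0) →
      ∃ i ∈ U, ∃ j ∈ Uᶜ, ∃ m ∈ Finset.Icc 1 M, ∃ n ∈ Finset.Icc 1 M,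
        0 < α i ∧ 0 < α j ∧ α i * (m : ℝ) = α j * (n : ℝ)}

/-- The product Bernoulli distribution on ON-OFF (M = 1) channel states. -/
def bernoulliPi {N K : ℕ} (p : Fin N → Fin K → ℝ) : ChanState N K 1 → ℝ :=
  fun s => ∏ n, ∏ k, (if (s n k : ℕ) = 1 then p n k else 1 - p n k)

end
section AuxInt
variable {Ω : Type} [MeasurableSpace Ω] {μ : Measure Ω}

lemma comp_finite_eq_sum_indicator {β : Type*} [Fintype β] (g : Ω → β) (h : β → ℝ) (ω : Ω) :
    h (g ω) = ∑ b : β, Set.indicator (g ⁻¹' {b}) (fun _ => h b) ω := by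
  classical
  simp only [Set.indicator_apply, Set.mem_preimage, Set.mem_singleton_iff]
  rw [Finset.sum_ite_eq Finset.univ (g ω) h]
  simp

lemma integrable_comp_finite [IsFiniteMeasure μ]
    {β : Type*} [Fintype β] [MeasurableSpace β] [MeasurableSingletonClass β]
    {g : Ω → β} (hg : Measurable g) (h : β → ℝ) :
    Integrable (fun ω => h (g ω)) μ := by
  classical
  have : (fun ω => h (g ω)) = fun ω => ∑ b : β, Set.indicator (g ⁻¹' {b}) (fun _ => h b) ω :=
    funext fun ω => comp_finite_eq_sum_indicator g h ω
  rw [this]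
  exact integrable_finset_sum _ fun b _ =>
    (integrable_const (h b)).indicator (hg (measurableSet_singleton b))

lemma integral_comp_finite [IsFiniteMeasure μ]
    {β : Type*} [Fintype β] [MeasurableSpace β] [MeasurableSingletonClass β]
    {g : Ω → β} (hg : Measurable g) (h : β → ℝ) :
    ∫ ω, h (g ω) ∂μ = ∑ b : β, (μ (g ⁻¹' {b})).toReal * h b := by
  classical
  have : (fun ω => h (g ω)) = fun ω => ∑ b : β, Set.indicator (g ⁻¹' {b}) (fun _ => h b) ω :=
    funext fun ω => comp_finite_eq_sum_indicator g h ω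
  rw [this, integral_finset_sum _ fun b _ =>
    (integrable_const (h b)).indicator (hg (measurableSet_singleton b))]
  exact Finset.sum_congr rfl fun b _ => by
    rw [integral_indicator_const (h b) (hg (measurableSet_singleton b)), smul_eq_mul]; rfl

end AuxInt

section AuxConv
open MeasureTheory Finset

lemma mem_ratePolytope_of_weights {N K M : ℕ} [NeZero N] (π : ChanState N K M → ℝ)
    (w : ChanState N K M → (Fin K → Fin N) → ℝ)
    (hw0 : ∀ s f, 0 ≤ w s f) (hwsum : ∀ s, ∑ f : Fin K → Fin N, w s f = π s) :
    (fun n => ∑ s : ChanState N K M, ∑ f : Fin K → Fin N,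
        w s f * ∑ k, Cmat s n k * allocMat f n k) ∈ ratePolytope π := by
  classical
  have hπ0 : ∀ s, 0 ≤ π s := fun s => (hwsum s) ▸ Finset.sum_nonneg fun f _ => hw0 s f
  obtain ⟨f₀⟩ : Nonempty (Fin K → Fin N) := ⟨fun _ => ⟨0, Nat.pos_of_ne_zero (NeZero.ne N)⟩⟩
  set q : ChanState N K M → (Fin K → Fin N) → ℝ :=
    fun s f => if π s = 0 then (if f = f₀ then 1 else 0) else w s f / π s with hqdef
  have hq0 : ∀ s f, 0 ≤ q s f := by
    intro s f
    by_cases h : π s = 0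
    · simp only [hqdef, h, if_true]; positivity
    · simp only [hqdef, h, if_false]
      exact div_nonneg (hw0 s f) (hπ0 s)
  have hq1 : ∀ s, ∑ f : Fin K → Fin N, q s f = 1 := by
    intro s
    by_cases h : π s = 0
    · simp [hqdef, h]
    · simp only [hqdef, h, if_false, ← Finset.sum_div, hwsum s]
      exact div_self h
  have hwq : ∀ s f, w s f = π s * q s f := by
    intro s f
    by_cases h : π s = 0
    · have : w s f = 0 := by
        have := hwsum s
        rw [h] at this
        exact (Finset.sum_eq_zero_iff_of_nonneg (fun f _ => hw0 s f)).1 this f (Finset.mem_univ f)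
      simp [this, h]
    · simp only [hqdef, h, if_false]
      field_simp
  set c : (ChanState N K M → Fin K → Fin N) → ℝ := fun g => ∏ s, q s (g s) with hcdef
  have hc0 : ∀ g, 0 ≤ c g := fun g => Finset.prod_nonneg fun s _ => hq0 _ _
  have hcsum : ∑ g : ChanState N K M → Fin K → Fin N, c g = 1 := by
    have h1 := Finset.prod_univ_sum (fun _ : ChanState N K M => (Finset.univ : Finset (Fin K → Fin N))) q
    rw [Fintype.piFinset_univ] at h1
    rw [hcdef, ← h1]
    simp [hq1]
  have hmarg : ∀ (s' : ChanState N K M) (h : (Fin K → Fin N) → ℝ),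
      ∑ g : ChanState N K M → Fin K → Fin N, c g * h (g s') = ∑ f : Fin K → Fin N, q s' f * h f := by
    intro s' h
    have hb : ∀ g : ChanState N K M → Fin K → Fin N,
        c g * h (g s') = ∏ s, (q s (g s) * if s' = s then h (g s) else 1) := by
      intro g
      rw [Finset.prod_mul_distrib, Finset.prod_ite_eq Finset.univ s' (fun s => h (g s))]
      simp [hcdef]
    have h2 := Finset.prod_univ_sum (fun _ : ChanState N K M => (Finset.univ : Finset (Fin K → Fin N)))
      (fun s f => q s f * if s' = s then h f else 1)
    rw [Fintype.piFinset_univ] at h2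
    calc ∑ g : ChanState N K M → Fin K → Fin N, c g * h (g s')
        = ∑ g : ChanState N K M → Fin K → Fin N, ∏ s, (q s (g s) * if s' = s then h (g s) else 1) :=
          Finset.sum_congr rfl fun g _ => hb g
      _ = ∏ s, ∑ f : Fin K → Fin N, (q s f * if s' = s then h f else 1) := h2.symm
      _ = ∑ f : Fin K → Fin N, q s' f * h f := by
          have hother : ∀ s ∈ Finset.univ, s ≠ s' →
              (∑ f : Fin K → Fin N, (q s f * if s' = s then h f else 1)) = 1 := by
            intro s _ hs
            have hh : ∀ f : Fin K → Fin N, (q s f * if s' = s then h f else 1) = q s f := by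
              intro f
              rw [if_neg (fun hh : s' = s => hs hh.symm), mul_one]
            rw [Finset.sum_congr rfl fun f _ => hh f, hq1 s]
          rw [Finset.prod_eq_single s' hother (by simp)]
          simp
  have hy : (fun n => ∑ s : ChanState N K M, ∑ f : Fin K → Fin N,
        w s f * ∑ k, Cmat s n k * allocMat f n k)
      = ∑ g : ChanState N K M → Fin K → Fin N, c g • rateVec π g := by
    funext n
    rw [Finset.sum_apply]
    simp only [Pi.smul_apply, smul_eq_mul, rateVec]
    calc ∑ s : ChanState N K M, ∑ f : Fin K → Fin N, w s f * ∑ k, Cmat s n k * allocMat f n k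
        = ∑ s : ChanState N K M, π s * ∑ f : Fin K → Fin N,
            q s f * ∑ k, Cmat s n k * allocMat f n k := by
          refine Finset.sum_congr rfl fun s _ => ?_
          rw [Finset.mul_sum]
          exact Finset.sum_congr rfl fun f _ => by rw [hwq s f]; ring
      _ = ∑ s : ChanState N K M, π s * ∑ g : ChanState N K M → Fin K → Fin N,
            c g * ∑ k, Cmat s n k * allocMat (g s) n k := by
          refine Finset.sum_congr rfl fun s _ => ?_
          rw [hmarg s (fun f => ∑ k, Cmat s n k * allocMat f n k)]
      _ = ∑ g : ChanState N K M → Fin K → Fin N, c g *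
            ∑ s : ChanState N K M, π s * ∑ k, Cmat s n k * allocMat (g s) n k := by
          simp only [Finset.mul_sum]
          rw [Finset.sum_comm]
          exact Finset.sum_congr rfl fun g _ => Finset.sum_congr rfl fun s _ =>
            Finset.sum_congr rfl fun k _ => by ring
  rw [hy]
  exact Convex.sum_mem (convex_convexHull ℝ _) (fun g _ => hc0 g) hcsum
    (fun g _ => subset_convexHull ℝ _ ⟨g, rfl⟩)

end AuxConv

set_option maxHeartbeats 2000000 in
/-- if the MQMS system is strongly stable under some policy and the
time-average mean arrival rate vector exists, it lies in the downward closure of the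
achievable-rate polytope. -/
theorem stmt_1
    {N K M : ℕ} [NeZero N] [NeZero K] [NeZero M]
    (π : ChanState N K M → ℝ) (hπ0 : ∀ s, 0 ≤ π s) (hπ1 : ∑ s : ChanState N K M, π s = 1)
    {Ω : Type} [MeasurableSpace Ω] (μ : Measure Ω) [IsProbabilityMeasure μ]
    (X0 : Ω → Fin N → ℝ) (hX0m : Measurable X0) (hX0nn : ∀ ω n, 0 ≤ X0 ω n)
    (hX0int : ∀ n, Integrable (fun ω => X0 ω n) μ)
    (A : ℕ → Ω → Fin N → ℝ) (hAm : ∀ t, Measurable (A t))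
    (hAnn : ∀ t ω n, 0 ≤ A t ω n)
    (Amax : ℝ)
    (hA2int : ∀ t n, Integrable (fun ω => (A t ω n) ^ 2) μ)
    (hA2 : ∀ t n, ∫ ω, (A t ω n) ^ 2 ∂μ ≤ Amax ^ 2)
    (Cch : ℕ → Ω → ChanState N K M) (hCm : ∀ t, Measurable (Cch t))
    (hCdist : ∀ t, 1 ≤ t → ∀ s, μ {ω | Cch t ω = s} = ENNReal.ofReal (π s))
    (Ipol : ℕ → Ω → Fin K → Fin N) (hIm : ∀ t, Measurable (Ipol t))
    (X : ℕ → Ω → Fin N → ℝ) (hX0eq : X 0 = X0)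
    (hXrec : ∀ t, 1 ≤ t → ∀ ω n,
      X t ω n = max (X (t - 1) ω n - ∑ k, Cmat (Cch t ω) n k * allocMat (Ipol t ω) n k) 0
        + A t ω n)
    (hstable : ∀ n, ∃ B : ℝ, ∀ t : ℕ, 1 ≤ t →
      (∑ τ ∈ Finset.range t, ∫ ω, X τ ω n ∂μ) / t ≤ B)
    (Abar : Fin N → ℝ)
    (hAbar : ∀ n, Filter.Tendsto
      (fun t : ℕ => (∑ τ ∈ Finset.Icc 1 t, ∫ ω, A τ ω n ∂μ) / t)
      Filter.atTop (nhds (Abar n))) :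
    ∃ y ∈ ratePolytope π, ∀ n, Abar n ≤ y n := by
  classical
  have hpm : ∀ t, Measurable (fun ω => (Cch t ω, Ipol t ω)) := fun t => (hCm t).prodMk (hIm t)
  set v : ChanState N K M → (Fin K → Fin N) → Fin N → ℝ :=
    fun s f n => ∑ k, Cmat s n k * allocMat f n k with hv
  have hv0 : ∀ s f n, 0 ≤ v s f n := by
    intro s f n
    refine Finset.sum_nonneg fun k _ => mul_nonneg (Nat.cast_nonneg _) ?_
    unfold allocMat; split <;> norm_num
  have hservm : ∀ t n, Measurable (fun ω => v (Cch t ω) (Ipol t ω) n) := fun t n =>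
    (measurable_of_countable (fun p : ChanState N K M × (Fin K → Fin N) => v p.1 p.2 n)).comp
      (hpm t)
  have hservint : ∀ t n, Integrable (fun ω => v (Cch t ω) (Ipol t ω) n) μ := fun t n =>
    integrable_comp_finite (hpm t) (fun p : ChanState N K M × (Fin K → Fin N) => v p.1 p.2 n)
  set r : ℕ → Fin N → ℝ := fun t n => ∫ ω, v (Cch t ω) (Ipol t ω) n ∂μ with hr
  -- membership of per-slot expected service rates in the polytope
  have rmem : ∀ t : ℕ, 1 ≤ t → r t ∈ ratePolytope π := by
    intro t ht
    have hw0 : ∀ (s : ChanState N K M) (f : Fin K → Fin N),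
        0 ≤ (μ ((fun ω => (Cch t ω, Ipol t ω)) ⁻¹' {(s, f)})).toReal :=
      fun s f => ENNReal.toReal_nonneg
    have hwsum : ∀ s : ChanState N K M,
        ∑ f : Fin K → Fin N, (μ ((fun ω => (Cch t ω, Ipol t ω)) ⁻¹' {(s, f)})).toReal = π s := by
      intro s
      have hun : Cch t ⁻¹' {s} =
          ⋃ f ∈ (Finset.univ : Finset (Fin K → Fin N)),
            (fun ω => (Cch t ω, Ipol t ω)) ⁻¹' {(s, f)} := by
        ext ω
        simp [Prod.ext_iff]
      have hdisj : ((Finset.univ : Finset (Fin K → Fin N)) : Set (Fin K → Fin N)).PairwiseDisjoint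
          (fun f => (fun ω => (Cch t ω, Ipol t ω)) ⁻¹' {(s, f)}) := by
        intro f1 _ f2 _ hne
        rw [Function.onFun, Set.disjoint_left]
        intro ω h1 h2
        apply hne
        simp only [Set.mem_preimage, Set.mem_singleton_iff, Prod.mk.injEq] at h1 h2
        rw [← h1.2, ← h2.2]
      have hμeq : μ (Cch t ⁻¹' {s}) =
          ∑ f : Fin K → Fin N, μ ((fun ω => (Cch t ω, Ipol t ω)) ⁻¹' {(s, f)}) := by
        rw [hun, measure_biUnion_finset hdisj (fun f _ => (hpm t) (measurableSet_singleton (s, f)))]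
      have hset : Cch t ⁻¹' {s} = {ω | Cch t ω = s} := by ext ω; simp
      rw [hset, hCdist t ht s] at hμeq
      calc ∑ f : Fin K → Fin N, (μ ((fun ω => (Cch t ω, Ipol t ω)) ⁻¹' {(s, f)})).toReal
          = (∑ f : Fin K → Fin N, μ ((fun ω => (Cch t ω, Ipol t ω)) ⁻¹' {(s, f)})).toReal :=
            (ENNReal.toReal_sum (fun f _ => measure_ne_top μ _)).symm
        _ = (ENNReal.ofReal (π s)).toReal := by rw [← hμeq]
        _ = π s := ENNReal.toReal_ofReal (hπ0 s)
    have hmem := mem_ratePolytope_of_weights π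
      (fun s f => (μ ((fun ω => (Cch t ω, Ipol t ω)) ⁻¹' {(s, f)})).toReal) hw0 hwsum
    have hreq : r t = fun n => ∑ s : ChanState N K M, ∑ f : Fin K → Fin N,
        (μ ((fun ω => (Cch t ω, Ipol t ω)) ⁻¹' {(s, f)})).toReal *
          ∑ k, Cmat s n k * allocMat f n k := by
      funext n
      have e : (∫ ω, v (Cch t ω) (Ipol t ω) n ∂μ)
          = ∑ p : ChanState N K M × (Fin K → Fin N),
            (μ ((fun ω => (Cch t ω, Ipol t ω)) ⁻¹' {p})).toReal * v p.1 p.2 n :=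
        integral_comp_finite (hpm t) (fun p => v p.1 p.2 n)
      simp only [hr]
      rw [e, Fintype.sum_prod_type]
    rw [hreq]
    exact hmem
  -- integrability of arrivals
  have hAint : ∀ t n, Integrable (fun ω => A t ω n) μ := by
    intro t n
    refine Integrable.mono' ((integrable_const (1:ℝ)).add (hA2int t n))
      ((measurable_pi_apply n).comp (hAm t)).aestronglyMeasurable ?_
    refine Filter.Eventually.of_forall fun ω => ?_
    have h0 := hAnn t ω n
    rw [Real.norm_of_nonneg h0]
    simp only [Pi.add_apply]
    nlinarith [sq_nonneg (A t ω n - 1)]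
  -- measurability / nonnegativity / integrability of queues
  have hXm : ∀ t n, Measurable (fun ω => X t ω n) := by
    intro t
    induction t with
    | zero => intro n; rw [hX0eq]; exact (measurable_pi_apply n).comp hX0m
    | succ t ih =>
      intro n
      have he : (fun ω => X (t+1) ω n)
          = fun ω => max (X t ω n - v (Cch (t+1) ω) (Ipol (t+1) ω) n) 0 + A (t+1) ω n := by
        funext ω
        rw [hXrec (t+1) (by omega) ω n]
        simp [hv]
      rw [he]
      exact (((ih n).sub (hservm (t+1) n)).max measurable_const).add
        ((measurable_pi_apply n).comp (hAm (t+1)))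
  have hXnn : ∀ t ω n, 0 ≤ X t ω n := by
    intro t
    induction t with
    | zero => intro ω n; rw [hX0eq]; exact hX0nn ω n
    | succ t ih =>
      intro ω n
      rw [hXrec (t+1) (by omega) ω n]
      exact add_nonneg (le_max_right _ _) (hAnn _ _ _)
  have hXint : ∀ t n, Integrable (fun ω => X t ω n) μ := by
    intro t
    induction t with
    | zero => intro n; rw [hX0eq]; exact hX0int n
    | succ t ih =>
      intro n
      refine Integrable.mono' ((ih n).add (hAint (t+1) n)) (hXm (t+1) n).aestronglyMeasurable ?_
      refine Filter.Eventually.of_forall fun ω => ?_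
      rw [Real.norm_of_nonneg (hXnn (t+1) ω n), hXrec (t+1) (by omega) ω n]
      simp only [Pi.add_apply, Nat.add_sub_cancel]
      have hs0 : 0 ≤ ∑ k, Cmat (Cch (t+1) ω) n k * allocMat (Ipol (t+1) ω) n k := hv0 _ _ n
      have h1 : max (X t ω n - ∑ k, Cmat (Cch (t+1) ω) n k * allocMat (Ipol (t+1) ω) n k) 0
          ≤ X t ω n := by
        apply max_le _ (hXnn t ω n)
        linarith
      linarith
  -- one-step drift bound
  have hdrift : ∀ t : ℕ, 1 ≤ t → ∀ n,
      ∫ ω, X (t-1) ω n ∂μ - r t n + ∫ ω, A t ω n ∂μ ≤ ∫ ω, X t ω n ∂μ := by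
    intro t ht n
    have hpt : (fun ω => X (t-1) ω n - v (Cch t ω) (Ipol t ω) n + A t ω n)
        ≤ fun ω => X t ω n := by
      intro ω
      show X (t-1) ω n - v (Cch t ω) (Ipol t ω) n + A t ω n ≤ X t ω n
      rw [hXrec t ht ω n]
      have h1 := le_max_left
        (X (t-1) ω n - ∑ k, Cmat (Cch t ω) n k * allocMat (Ipol t ω) n k) 0
      simp only [hv]
      linarith
    have hint1 : Integrable (fun ω => X (t-1) ω n - v (Cch t ω) (Ipol t ω) n) μ :=
      (hXint (t-1) n).sub (hservint t n)
    have hint : Integrable (fun ω => X (t-1) ω n - v (Cch t ω) (Ipol t ω) n + A t ω n) μ :=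
      hint1.add (hAint t n)
    have hmono := integral_mono hint (hXint t n) hpt
    rw [integral_add hint1 (hAint t n),
        integral_sub (hXint (t-1) n) (hservint t n)] at hmono
    simpa [hr] using hmono
  -- telescoped drift bound
  have htel : ∀ t : ℕ, ∀ n, ∑ τ ∈ Finset.Icc 1 t, (∫ ω, A τ ω n ∂μ - r τ n)
      ≤ ∫ ω, X t ω n ∂μ - ∫ ω, X 0 ω n ∂μ := by
    intro t
    induction t with
    | zero => intro n; simp
    | succ t ih =>
      intro n
      rw [Finset.sum_Icc_succ_top (by omega : 1 ≤ t + 1)]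
      have hd := hdrift (t+1) (by omega) n
      simp only [Nat.add_sub_cancel] at hd
      have := ih n
      linarith
  -- stability: total expected queue length has bounded Cesàro sums
  choose B hB using hstable
  set Fq : ℕ → ℝ := fun τ => ∑ n, ∫ ω, X τ ω n ∂μ with hFq
  have hFnn : ∀ τ, 0 ≤ Fq τ := fun τ => Finset.sum_nonneg fun n _ =>
    integral_nonneg fun ω => hXnn τ ω n
  set Btot : ℝ := ∑ n, B n with hBtot
  have hFsum : ∀ t : ℕ, 1 ≤ t → ∑ τ ∈ Finset.range t, Fq τ ≤ Btot * t := by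
    intro t ht
    calc ∑ τ ∈ Finset.range t, Fq τ
        = ∑ n, ∑ τ ∈ Finset.range t, ∫ ω, X τ ω n ∂μ := Finset.sum_comm
      _ ≤ ∑ n, B n * t := by
          refine Finset.sum_le_sum fun n _ => ?_
          have hb := hB n t ht
          have htpos : (0:ℝ) < t := by exact_mod_cast ht
          rw [div_le_iff₀ htpos] at hb
          linarith
      _ = Btot * t := by rw [hBtot, Finset.sum_mul]
  have hBtot0 : 0 ≤ Btot := by
    have h1 := hFsum 1 le_rfl
    have h2 := hFnn 0
    simp [Finset.sum_range_one] at h1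
    linarith
  -- choice of good time instants
  have hgood : ∀ T : ℕ, ∃ t : ℕ, T + 1 ≤ t ∧ Fq t ≤ 2 * Btot := by
    intro T
    by_contra hcon
    push_neg at hcon
    set T' := T + 1 with hT'
    have hlt : ∀ τ ∈ Finset.Ico T' (2*T'), 2*Btot < Fq τ := fun τ hτ =>
      hcon τ (Finset.mem_Ico.mp hτ).1
    have hcard : (Finset.Ico T' (2*T')).card = T' := by rw [Nat.card_Ico]; omega
    have hne : (Finset.Ico T' (2*T')).Nonempty := by rw [Finset.nonempty_Ico]; omega
    have h1 : (T' : ℝ) * (2 * Btot) < ∑ τ ∈ Finset.Ico T' (2*T'), Fq τ := by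
      have := Finset.sum_lt_sum_of_nonempty hne hlt
      simpa [Finset.sum_const, hcard, nsmul_eq_mul] using this
    have h2 : ∑ τ ∈ Finset.Ico T' (2*T'), Fq τ ≤ ∑ τ ∈ Finset.range (2*T'), Fq τ := by
      apply Finset.sum_le_sum_of_subset_of_nonneg
      · intro x hx
        rw [Finset.mem_range]
        exact (Finset.mem_Ico.mp hx).2
      · intro τ _ _
        exact hFnn τ
    have h3 := hFsum (2*T') (by omega)
    have h4 : (T':ℝ) * (2*Btot) < Btot * ((2*T' : ℕ) : ℝ) :=
      lt_of_lt_of_le (lt_of_lt_of_le h1 h2) h3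
    push_cast at h4
    linarith
  choose φ hφ1 hφ2 using hgood
  -- the running average of the expected service rates
  set ybar : ℕ → Fin N → ℝ := fun t n => (∑ τ ∈ Finset.Icc 1 t, r τ n) / t with hybar
  have hymem : ∀ t : ℕ, 1 ≤ t → ybar t ∈ ratePolytope π := by
    intro t ht
    have hcard : (Finset.Icc 1 t).card = t := by rw [Nat.card_Icc]; omega
    have ht' : (t:ℝ) ≠ 0 := Nat.cast_ne_zero.mpr (by omega)
    have heq : ybar t = ∑ τ ∈ Finset.Icc 1 t, ((t : ℝ)⁻¹) • r τ := by
      funext n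
      simp only [hybar, Finset.sum_apply, Pi.smul_apply, smul_eq_mul, Finset.sum_div]
      exact Finset.sum_congr rfl fun τ _ => div_eq_inv_mul _ _
    rw [heq]
    refine Convex.sum_mem (convex_convexHull ℝ _) (fun τ _ => by positivity) ?_
      (fun τ hτ => rmem τ (Finset.mem_Icc.mp hτ).1)
    rw [Finset.sum_const, hcard, nsmul_eq_mul]
    field_simp
  -- compactness of the polytope and subsequence extraction
  have hfin : {rr : Fin N → ℝ | ∃ g : ChanState N K M → Fin K → Fin N, rr = rateVec π g}.Finite := by
    have hset : {rr : Fin N → ℝ | ∃ g : ChanState N K M → Fin K → Fin N, rr = rateVec π g}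
        = Set.range (rateVec π) := by
      ext x
      simp [Set.mem_range, eq_comm]
    rw [hset]
    exact Set.finite_range _
  have hPcomp : IsCompact (ratePolytope π) := hfin.isCompact_convexHull ℝ
  obtain ⟨y, hyP, ψ, hψ, hyconv⟩ := hPcomp.tendsto_subseq
    (x := fun T => ybar (φ T)) (fun T => hymem (φ T) (by have := hφ1 T; omega))
  refine ⟨y, hyP, fun n => ?_⟩
  -- the key inequality
  have hkey : ∀ t : ℕ, 1 ≤ t →
      (∑ τ ∈ Finset.Icc 1 t, ∫ ω, A τ ω n ∂μ) / t ≤ ybar t n + Fq t / t := by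
    intro t ht
    have h1 := htel t n
    rw [Finset.sum_sub_distrib] at h1
    have hX0' : 0 ≤ ∫ ω, X 0 ω n ∂μ := integral_nonneg fun ω => hXnn 0 ω n
    have hXF : ∫ ω, X t ω n ∂μ ≤ Fq t := by
      rw [hFq]
      exact Finset.single_le_sum (f := fun m => ∫ ω, X t ω m ∂μ) (fun m _ => integral_nonneg fun ω => hXnn t ω m)
        (Finset.mem_univ n)
    have h2 : ∑ τ ∈ Finset.Icc 1 t, ∫ ω, A τ ω n ∂μ
        ≤ (∑ τ ∈ Finset.Icc 1 t, r τ n) + Fq t := by linarith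
    simp only [hybar]
    calc (∑ τ ∈ Finset.Icc 1 t, ∫ ω, A τ ω n ∂μ) / (t:ℝ)
        ≤ ((∑ τ ∈ Finset.Icc 1 t, r τ n) + Fq t) / (t:ℝ) := by gcongr
      _ = (∑ τ ∈ Finset.Icc 1 t, r τ n) / (t:ℝ) + Fq t / (t:ℝ) := add_div _ _ _
  -- the subsequence of good times
  set χ : ℕ → ℕ := fun T => φ (ψ T) with hχ
  have hχ1 : ∀ T, T + 1 ≤ χ T := by
    intro T
    have h1 : T ≤ ψ T := hψ.le_apply
    have h2 := hφ1 (ψ T)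
    simp only [hχ]
    omega
  have hχtop : Filter.Tendsto χ Filter.atTop Filter.atTop :=
    tendsto_atTop_mono (fun T => by have := hχ1 T; simp only [id_eq]; omega) tendsto_id
  have hAlim : Filter.Tendsto
      (fun T => (∑ τ ∈ Finset.Icc 1 (χ T), ∫ ω, A τ ω n ∂μ) / (χ T : ℝ))
      Filter.atTop (nhds (Abar n)) := (hAbar n).comp hχtop
  have hylim : Filter.Tendsto (fun T => ybar (χ T) n) Filter.atTop (nhds (y n)) :=
    tendsto_pi_nhds.mp hyconv n
  have hFlim : Filter.Tendsto (fun T => Fq (χ T) / (χ T : ℝ)) Filter.atTop (nhds 0) := by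
    refine squeeze_zero (fun T => div_nonneg (hFnn _) (Nat.cast_nonneg _))
      (g := fun T : ℕ => (2*Btot) / ((T:ℝ)+1)) (fun T => ?_) ?_
    · have h1 : Fq (χ T) ≤ 2*Btot := hφ2 (ψ T)
      have h2 : (T:ℝ) + 1 ≤ (χ T : ℝ) := by exact_mod_cast hχ1 T
      have h3 : (0:ℝ) < (T:ℝ) + 1 := by positivity
      calc Fq (χ T) / (χ T : ℝ) ≤ (2*Btot) / (χ T : ℝ) := by gcongr
        _ ≤ (2*Btot) / ((T:ℝ)+1) := by gcongr
    · have h := (tendsto_const_div_atTop_nhds_zero_nat (2*Btot)).comp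
        (Filter.tendsto_add_atTop_nat 1)
      have heq : ((fun n : ℕ => 2*Btot / (n:ℝ)) ∘ (fun T : ℕ => T + 1))
          = fun T : ℕ => (2*Btot) / ((T:ℝ)+1) := by
        funext T
        simp [Function.comp]
      rw [heq] at h
      exact h
  have hineq : ∀ T, (∑ τ ∈ Finset.Icc 1 (χ T), ∫ ω, A τ ω n ∂μ) / (χ T : ℝ)
      ≤ ybar (χ T) n + Fq (χ T) / (χ T : ℝ) := fun T => hkey (χ T) (by have := hχ1 T; omega)
  have hfinal := le_of_tendsto_of_tendsto' hAlim (hylim.add hFlim) hineq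
  simpa using hfinal
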